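/- Derivative of the double contour integral factorizes (from the proof of Lemma A.2). With F₁ defined by F₁(y) = ∫_{Y₁∪Y₂} ( ∫_{Y₃∪Y₄} (sz/(s−z)) e^{−2i(ys + 4s³/3)} ds ) e^{2i(yz + 4z³/3)} dz, the function F₁ : ℝ → ℂ is differentiable and for every y ∈ ℝ, F₁'(y) = −2i ( ∫_{Y₁∪Y₂} z e^{2i(yz + 4z³/3)} dz ) ( ∫_{Y₃∪Y₄} s e^{−2i(ys + 4s³/3)} ds ). -/

import Mathlib

open MeasureTheory Set

/-- The unit direction `e^{iπ/6}` of the ray `Y₁`. -/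
noncomputable def e1 : ℂ := Complex.exp (Real.pi / 6 * Complex.I)

/-- The unit direction `e^{5iπ/6}` of the ray `Y₂`. -/
noncomputable def e5 : ℂ := Complex.exp (5 * Real.pi / 6 * Complex.I)

/-- The unit direction `e^{-iπ/6}` of the ray `Y₄`. -/
noncomputable def em1 : ℂ := Complex.exp (-(Real.pi / 6) * Complex.I)

/-- The unit direction `e^{-5iπ/6}` of the ray `Y₃`. -/
noncomputable def em5 : ℂ := Complex.exp (-(5 * Real.pi / 6) * Complex.I)

/-- The contour integral over `Y₁ ∪ Y₂`. -/
noncomputable def CInt12 (h : ℂ → ℂ) : ℂ :=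
  (∫ r in Ioi (0 : ℝ), h (r * e1)) * e1 - (∫ r in Ioi (0 : ℝ), h (r * e5)) * e5

/-- The contour integral over `Y₃ ∪ Y₄`. -/
noncomputable def CInt34 (h : ℂ → ℂ) : ℂ :=
  (∫ r in Ioi (0 : ℝ), h (r * em1)) * em1 - (∫ r in Ioi (0 : ℝ), h (r * em5)) * em5

/-- `F₁(y) = ∫_{Y₁∪Y₂} (∫_{Y₃∪Y₄} (sz/(s-z)) e^{-2i(ys+4s³/3)} ds) e^{2i(yz+4z³/3)} dz`. -/
noncomputable def F1 (y : ℝ) : ℂ :=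
  CInt12 fun z =>
    (CInt34 fun s =>
      s * z / (s - z) * Complex.exp (-(2 * Complex.I) * (y * s + 4 * s ^ 3 / 3))) *
      Complex.exp (2 * Complex.I * (y * z + 4 * z ^ 3 / 3))

structure GoodPair (a b : ℂ) : Prop where
  abs_a : ‖a‖ = 1
  abs_b : ‖b‖ = 1
  im_a : a.im = 1 / 2
  im_b : b.im = -(1 / 2)
  cube_a : a ^ 3 = Complex.I
  cube_b : b ^ 3 = -Complex.I
  re_mul : (b * (starRingEnd ℂ) a).re ≤ 1 / 2

lemma exp_theta_abs (θ : ℝ) : ‖Complex.exp (θ * Complex.I)‖ = 1 := by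
  simpa using Complex.norm_exp_ofReal_mul_I θ

lemma exp_theta_im (θ : ℝ) : (Complex.exp (θ * Complex.I)).im = Real.sin θ := by
  simpa using Complex.exp_ofReal_mul_I_im θ

lemma exp_theta_cube (θ : ℝ) : (Complex.exp (θ * Complex.I)) ^ 3 = Complex.exp ((3*θ : ℝ) * Complex.I) := by
  rw [← Complex.exp_nat_mul]
  push_cast; ring_nf

lemma conj_exp_theta (θ : ℝ) : (starRingEnd ℂ) (Complex.exp (θ * Complex.I)) = Complex.exp ((-θ : ℝ) * Complex.I) := by
  rw [← Complex.exp_conj]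
  congr 1
  simp

lemma mul_conj_exp (φ θ : ℝ) :
    Complex.exp (φ * Complex.I) * (starRingEnd ℂ) (Complex.exp (θ * Complex.I))
      = Complex.exp ((φ - θ : ℝ) * Complex.I) := by
  rw [conj_exp_theta, ← Complex.exp_add]
  push_cast; ring_nf

lemma exp_theta_re (θ : ℝ) : (Complex.exp (θ * Complex.I)).re = Real.cos θ := by
  simpa using Complex.exp_ofReal_mul_I_re θ

lemma e1_eq : e1 = Complex.exp ((Real.pi / 6 : ℝ) * Complex.I) := by
  unfold e1; norm_num
lemma e5_eq : e5 = Complex.exp ((5 * Real.pi / 6 : ℝ) * Complex.I) := by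
  unfold e5; norm_num
lemma em1_eq : em1 = Complex.exp ((-(Real.pi / 6) : ℝ) * Complex.I) := by
  unfold em1; norm_num
lemma em5_eq : em5 = Complex.exp ((-(5 * Real.pi / 6) : ℝ) * Complex.I) := by
  unfold em5; norm_num

lemma exp_special (x : ℝ) (hc : Real.cos x = 0) (hs : Real.sin x = 1) :
    Complex.exp ((x : ℝ) * Complex.I) = Complex.I := by
  rw [Complex.exp_mul_I, ← Complex.ofReal_cos, ← Complex.ofReal_sin, hc, hs]
  simp

lemma exp_special' (x : ℝ) (hc : Real.cos x = 0) (hs : Real.sin x = -1) :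
    Complex.exp ((x : ℝ) * Complex.I) = -Complex.I := by
  rw [Complex.exp_mul_I, ← Complex.ofReal_cos, ← Complex.ofReal_sin, hc, hs]
  simp

lemma cube_e1 : e1 ^ 3 = Complex.I := by
  rw [e1_eq, exp_theta_cube]
  exact exp_special _ (by rw [show 3*(Real.pi/6) = Real.pi/2 by ring, Real.cos_pi_div_two])
    (by rw [show 3*(Real.pi/6) = Real.pi/2 by ring, Real.sin_pi_div_two])

lemma cube_e5 : e5 ^ 3 = Complex.I := by
  rw [e5_eq, exp_theta_cube]
  exact exp_special _
    (by rw [show 3*(5*Real.pi/6) = Real.pi/2 + 2*Real.pi by ring, Real.cos_add_two_pi, Real.cos_pi_div_two])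
    (by rw [show 3*(5*Real.pi/6) = Real.pi/2 + 2*Real.pi by ring, Real.sin_add_two_pi, Real.sin_pi_div_two])

lemma cube_em1 : em1 ^ 3 = -Complex.I := by
  rw [em1_eq, exp_theta_cube]
  exact exp_special' _
    (by rw [show 3*(-(Real.pi/6)) = -(Real.pi/2) by ring, Real.cos_neg, Real.cos_pi_div_two])
    (by rw [show 3*(-(Real.pi/6)) = -(Real.pi/2) by ring, Real.sin_neg, Real.sin_pi_div_two])

lemma cube_em5 : em5 ^ 3 = -Complex.I := by
  rw [em5_eq, exp_theta_cube]
  exact exp_special' _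
    (by rw [show 3*(-(5*Real.pi/6)) = -(Real.pi/2) - 2*Real.pi by ring, Real.cos_sub_two_pi, Real.cos_neg, Real.cos_pi_div_two])
    (by rw [show 3*(-(5*Real.pi/6)) = -(Real.pi/2) - 2*Real.pi by ring, Real.sin_sub_two_pi, Real.sin_neg, Real.sin_pi_div_two])

lemma sin_five_pi_div_six : Real.sin (5 * Real.pi / 6) = 1 / 2 := by
  rw [show 5*Real.pi/6 = Real.pi - Real.pi/6 by ring, Real.sin_pi_sub, Real.sin_pi_div_six]

lemma gp_e1_em1 : GoodPair e1 em1 := by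
  refine ⟨?_, ?_, ?_, ?_, cube_e1, cube_em1, ?_⟩
  · rw [e1_eq]; exact exp_theta_abs _
  · rw [em1_eq]; exact exp_theta_abs _
  · rw [e1_eq, exp_theta_im, Real.sin_pi_div_six]
  · rw [em1_eq, exp_theta_im, Real.sin_neg, Real.sin_pi_div_six]
  · rw [em1_eq, e1_eq, mul_conj_exp, exp_theta_re,
      show -(Real.pi/6) - Real.pi/6 = -(Real.pi/3) by ring, Real.cos_neg, Real.cos_pi_div_three]

lemma gp_e1_em5 : GoodPair e1 em5 := by
  refine ⟨?_, ?_, ?_, ?_, cube_e1, cube_em5, ?_⟩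
  · rw [e1_eq]; exact exp_theta_abs _
  · rw [em5_eq]; exact exp_theta_abs _
  · rw [e1_eq, exp_theta_im, Real.sin_pi_div_six]
  · rw [em5_eq, exp_theta_im, Real.sin_neg, sin_five_pi_div_six]
  · rw [em5_eq, e1_eq, mul_conj_exp, exp_theta_re,
      show -(5*Real.pi/6) - Real.pi/6 = -Real.pi by ring, Real.cos_neg, Real.cos_pi]
    norm_num

lemma gp_e5_em1 : GoodPair e5 em1 := by
  refine ⟨?_, ?_, ?_, ?_, cube_e5, cube_em1, ?_⟩
  · rw [e5_eq]; exact exp_theta_abs _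
  · rw [em1_eq]; exact exp_theta_abs _
  · rw [e5_eq, exp_theta_im, sin_five_pi_div_six]
  · rw [em1_eq, exp_theta_im, Real.sin_neg, Real.sin_pi_div_six]
  · rw [em1_eq, e5_eq, mul_conj_exp, exp_theta_re,
      show -(Real.pi/6) - 5*Real.pi/6 = -Real.pi by ring, Real.cos_neg, Real.cos_pi]
    norm_num

lemma gp_e5_em5 : GoodPair e5 em5 := by
  refine ⟨?_, ?_, ?_, ?_, cube_e5, cube_em5, ?_⟩
  · rw [e5_eq]; exact exp_theta_abs _
  · rw [em5_eq]; exact exp_theta_abs _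
  · rw [e5_eq, exp_theta_im, sin_five_pi_div_six]
  · rw [em5_eq, exp_theta_im, Real.sin_neg, sin_five_pi_div_six]
  · rw [em5_eq, e5_eq, mul_conj_exp, exp_theta_re,
      show -(5*Real.pi/6) - 5*Real.pi/6 = Real.pi/3 - 2*Real.pi by ring, Real.cos_sub_two_pi, Real.cos_pi_div_three]

noncomputable def Ep (y : ℝ) (z : ℂ) : ℂ := Complex.exp (2 * Complex.I * (y * z + 4 * z ^ 3 / 3))
noncomputable def Em (y : ℝ) (s : ℂ) : ℂ := Complex.exp (-(2 * Complex.I) * (y * s + 4 * s ^ 3 / 3))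

lemma re_aux (c d : ℝ) (u : ℂ) : ((c:ℂ) * Complex.I * u + (d:ℂ)).re = -(c * u.im) + d := by
  simp [Complex.add_re, Complex.mul_re, Complex.mul_im]

lemma abs_Ep (a : ℂ) (ha3 : a ^ 3 = Complex.I) (him : a.im = 1/2) (y r : ℝ) :
    ‖Ep y ((r:ℂ) * a)‖ = Real.exp (-y * r - 8 * r ^ 3 / 3) := by
  unfold Ep
  rw [Complex.norm_exp]
  congr 1
  have h3 : ((r:ℂ) * a) ^ 3 = (r^3 : ℝ) * Complex.I := by
    rw [mul_pow, ha3]; push_cast; ring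
  have key : 2 * Complex.I * ((y:ℂ) * ((r:ℂ) * a) + 4 * ((r:ℂ)*a) ^ 3 / 3)
      = ((2*y*r : ℝ):ℂ) * Complex.I * a + ((-(8*r^3/3) : ℝ):ℂ) := by
    rw [h3]; push_cast
    linear_combination (8*(r:ℂ)^3/3) * Complex.I_sq
  rw [key, re_aux, him]; ring

lemma abs_Em (b : ℂ) (hb3 : b ^ 3 = -Complex.I) (him : b.im = -(1/2)) (y r : ℝ) :
    ‖Em y ((r:ℂ) * b)‖ = Real.exp (-y * r - 8 * r ^ 3 / 3) := by
  unfold Em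
  rw [Complex.norm_exp]
  congr 1
  have h3 : ((r:ℂ) * b) ^ 3 = (r^3 : ℝ) * -Complex.I := by
    rw [mul_pow, hb3]; push_cast; ring
  have key : -(2 * Complex.I) * ((y:ℂ) * ((r:ℂ) * b) + 4 * ((r:ℂ)*b) ^ 3 / 3)
      = ((-(2*y*r) : ℝ):ℂ) * Complex.I * b + ((-(8*r^3/3) : ℝ):ℂ) := by
    rw [h3]; push_cast
    linear_combination (8*(r:ℂ)^3/3) * Complex.I_sq
  rw [key, re_aux, him]; ring

lemma sep (a b : ℂ) (habs_a : ‖a‖ = 1) (habs_b : ‖b‖ = 1)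
    (hre : (b * (starRingEnd ℂ) a).re ≤ 1/2) (r r' : ℝ) (hr : 0 ≤ r) (hr' : 0 ≤ r') :
    Real.sqrt (r * r') ≤ ‖(r':ℂ) * b - (r:ℂ) * a‖ := by
  have hna : Complex.normSq a = 1 := by
    rw [← Complex.sq_norm, habs_a]; norm_num
  have hnb : Complex.normSq b = 1 := by
    rw [← Complex.sq_norm, habs_b]; norm_num
  have h1 : Complex.normSq ((r':ℂ) * b - (r:ℂ) * a)
      = r'^2 + r^2 - 2 * (r * r') * (b * (starRingEnd ℂ) a).re := by
    rw [Complex.normSq_sub]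
    have : (r':ℂ) * b * (starRingEnd ℂ) ((r:ℂ) * a) = ((r*r' : ℝ):ℂ) * (b * (starRingEnd ℂ) a) := by
      simp [map_mul, Complex.conj_ofReal]; push_cast; ring
    rw [this, Complex.normSq_mul, Complex.normSq_mul, hna, hnb]
    simp [Complex.normSq_ofReal, Complex.re_ofReal_mul]
    ring
  have h2 : r * r' ≤ Complex.normSq ((r':ℂ) * b - (r:ℂ) * a) := by
    rw [h1]; nlinarith [sq_nonneg (r - r'), mul_nonneg hr hr']
  calc Real.sqrt (r * r') ≤ Real.sqrt (Complex.normSq ((r':ℂ) * b - (r:ℂ) * a)) :=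
        Real.sqrt_le_sqrt h2
    _ = ‖(r':ℂ) * b - (r:ℂ) * a‖ := by rw [Complex.norm_def]

lemma int_exp_cubic (c : ℝ) :
    IntegrableOn (fun r : ℝ => Real.exp (c * r - 8 * r ^ 3 / 3)) (Ioi 0) := by
  set m : ℝ := max (c+1) 1 with hm
  have hm1 : 1 ≤ m := le_max_right _ _
  have key : ∀ r : ℝ, 0 ≤ r → c * r - 8 * r ^ 3 / 3 ≤ m ^ 2 - r := by
    intro r hr
    have hcm : (c + 1) * r ≤ m * r := mul_le_mul_of_nonneg_right (le_max_left _ _) hr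
    have h8 : m * r - 8 * r ^ 3 / 3 ≤ m ^ 2 := by
      rcases le_or_gt r m with h | h
      · have h1 : m * r ≤ m * m := mul_le_mul_of_nonneg_left h (by linarith)
        nlinarith [pow_nonneg hr 3]
      · have hm0 : (0:ℝ) ≤ m := by linarith
        have hmr : m * r ≤ m ^ 2 * r :=
          mul_le_mul_of_nonneg_right (by nlinarith) hr
        have hm2 : m ^ 2 ≤ r ^ 2 := by nlinarith
        have hr3 : m ^ 2 * r ≤ r ^ 3 := by
          have := mul_le_mul_of_nonneg_right hm2 hr
          nlinarith
        nlinarith [pow_nonneg hr 3, sq_nonneg m]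
    nlinarith
  have hint : IntegrableOn (fun r : ℝ => Real.exp (m^2) * Real.exp (-1 * r)) (Ioi 0) :=
    (exp_neg_integrableOn_Ioi 0 one_pos).const_mul _
  refine Integrable.mono' hint ?_ ?_
  · exact ((Real.continuous_exp.comp (by continuity)).aestronglyMeasurable)
  · filter_upwards [ae_restrict_mem measurableSet_Ioi] with r hr
    rw [Real.norm_eq_abs, abs_of_nonneg (Real.exp_nonneg _), ← Real.exp_add]
    apply Real.exp_le_exp.mpr
    have := key r (le_of_lt hr)
    linarith

lemma int_sqrt_exp_cubic (c : ℝ) :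
    IntegrableOn (fun r : ℝ => Real.sqrt r * Real.exp (c * r - 8 * r ^ 3 / 3)) (Ioi 0) := by
  refine Integrable.mono' (int_exp_cubic (c+1)) ?_ ?_
  · exact ((Real.continuous_sqrt.mul (Real.continuous_exp.comp (by continuity))).aestronglyMeasurable)
  · filter_upwards [ae_restrict_mem measurableSet_Ioi] with r hr
    rw [Real.norm_eq_abs, abs_of_nonneg (mul_nonneg (Real.sqrt_nonneg _) (Real.exp_nonneg _))]
    have h1 : Real.sqrt r ≤ Real.exp r := by
      have h2 : Real.sqrt r ≤ 1 + r := by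
        rw [show (1:ℝ) + r = Real.sqrt ((1+r)^2) from (Real.sqrt_sq (by linarith [le_of_lt (mem_Ioi.mp hr)])).symm]
        exact Real.sqrt_le_sqrt (by nlinarith [le_of_lt (mem_Ioi.mp hr)])
      linarith [Real.add_one_le_exp r]
    calc Real.sqrt r * Real.exp (c * r - 8 * r ^ 3 / 3)
        ≤ Real.exp r * Real.exp (c * r - 8 * r ^ 3 / 3) :=
          mul_le_mul_of_nonneg_right h1 (Real.exp_nonneg _)
      _ = Real.exp ((c+1) * r - 8 * r ^ 3 / 3) := by rw [← Real.exp_add]; ring_nf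
      _ ≤ _ := le_refl _

lemma int_id_exp_cubic (c : ℝ) :
    IntegrableOn (fun r : ℝ => r * Real.exp (c * r - 8 * r ^ 3 / 3)) (Ioi 0) := by
  refine Integrable.mono' (int_exp_cubic (c+1)) ?_ ?_
  · exact ((continuous_id.mul (Real.continuous_exp.comp (by continuity))).aestronglyMeasurable)
  · filter_upwards [ae_restrict_mem measurableSet_Ioi] with r hr
    rw [Real.norm_eq_abs, abs_of_nonneg (mul_nonneg (le_of_lt hr) (Real.exp_nonneg _))]
    have h1 : r ≤ Real.exp r := by linarith [Real.add_one_le_exp r]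
    calc r * Real.exp (c * r - 8 * r ^ 3 / 3)
        ≤ Real.exp r * Real.exp (c * r - 8 * r ^ 3 / 3) :=
          mul_le_mul_of_nonneg_right h1 (Real.exp_nonneg _)
      _ = Real.exp ((c+1) * r - 8 * r ^ 3 / 3) := by rw [← Real.exp_add]; ring_nf
      _ ≤ _ := le_refl _

noncomputable def K (a b : ℂ) (y : ℝ) (p : ℝ × ℝ) : ℂ :=
  (p.2:ℂ) * b * ((p.1:ℂ) * a) / ((p.2:ℂ) * b - (p.1:ℂ) * a) * Em y ((p.2:ℂ) * b) *
    Ep y ((p.1:ℂ) * a)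

noncomputable def K' (a b : ℂ) (y : ℝ) (p : ℝ × ℝ) : ℂ :=
  (-(2 * Complex.I) * ((p.1:ℂ) * a * Ep y ((p.1:ℂ) * a))) * ((p.2:ℂ) * b * Em y ((p.2:ℂ) * b))

noncomputable def mu2 : Measure (ℝ × ℝ) :=
  (volume.restrict (Ioi (0:ℝ))).prod (volume.restrict (Ioi (0:ℝ)))

lemma mu2_eq : mu2 = (volume : Measure (ℝ × ℝ)).restrict (Ioi (0:ℝ) ×ˢ Ioi (0:ℝ)) := by
  rw [mu2, MeasureTheory.Measure.volume_eq_prod, Measure.prod_restrict]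

lemma meas_K (a b : ℂ) (y : ℝ) : AEStronglyMeasurable (K a b y) mu2 := by
  unfold K Em Ep
  apply Measurable.aestronglyMeasurable
  fun_prop

lemma meas_K' (a b : ℂ) (y : ℝ) : AEStronglyMeasurable (K' a b y) mu2 := by
  unfold K' Em Ep
  apply Measurable.aestronglyMeasurable
  fun_prop

lemma norm_K_le (a b : ℂ) (h : GoodPair a b) (y : ℝ) {p : ℝ × ℝ}
    (hp : p ∈ Ioi (0:ℝ) ×ˢ Ioi (0:ℝ)) :
    ‖K a b y p‖ ≤ (Real.sqrt p.1 * Real.exp (-y * p.1 - 8 * p.1 ^ 3 / 3)) *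
      (Real.sqrt p.2 * Real.exp (-y * p.2 - 8 * p.2 ^ 3 / 3)) := by
  obtain ⟨hp1, hp2⟩ := hp
  have hr : (0:ℝ) < p.1 := hp1
  have hr' : (0:ℝ) < p.2 := hp2
  have hsep := sep a b h.abs_a h.abs_b h.re_mul p.1 p.2 hr.le hr'.le
  have hpos : (0:ℝ) < Real.sqrt (p.1 * p.2) := Real.sqrt_pos.mpr (by positivity)
  have hdivle : ‖(p.2:ℂ) * b * ((p.1:ℂ) * a) / ((p.2:ℂ) * b - (p.1:ℂ) * a)‖
      ≤ Real.sqrt p.1 * Real.sqrt p.2 := by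
    rw [norm_div]
    simp only [norm_mul, Complex.norm_real, Real.norm_eq_abs, h.abs_a, h.abs_b, mul_one,
      abs_of_pos hr, abs_of_pos hr']
    calc p.2 * p.1 / ‖(p.2:ℂ) * b - (p.1:ℂ) * a‖
        ≤ p.2 * p.1 / Real.sqrt (p.1 * p.2) := by
          apply div_le_div_of_nonneg_left (by positivity) hpos hsep
      _ = Real.sqrt p.1 * Real.sqrt p.2 := by
          rw [← Real.sqrt_mul hr.le]
          rw [show p.2 * p.1 = p.1 * p.2 by ring, Real.div_sqrt]
  have h1 := abs_Em b h.cube_b h.im_b y p.2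
  have h2 := abs_Ep a h.cube_a h.im_a y p.1
  calc ‖K a b y p‖
      = ‖(p.2:ℂ) * b * ((p.1:ℂ) * a) / ((p.2:ℂ) * b - (p.1:ℂ) * a)‖ *
        ‖Em y ((p.2:ℂ) * b)‖ * ‖Ep y ((p.1:ℂ) * a)‖ := by
        unfold K; rw [norm_mul, norm_mul]
    _ ≤ (Real.sqrt p.1 * Real.sqrt p.2) * Real.exp (-y * p.2 - 8 * p.2 ^ 3 / 3) *
        Real.exp (-y * p.1 - 8 * p.1 ^ 3 / 3) := by
        rw [h1, h2]
        apply mul_le_mul_of_nonneg_right _ (Real.exp_nonneg _)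
        exact mul_le_mul_of_nonneg_right hdivle (Real.exp_nonneg _)
    _ = _ := by ring

lemma norm_K'_le (a b : ℂ) (h : GoodPair a b) (y : ℝ) (p : ℝ × ℝ) :
    ‖K' a b y p‖ = 2 * ((|p.1| * Real.exp (-y * p.1 - 8 * p.1 ^ 3 / 3)) *
      (|p.2| * Real.exp (-y * p.2 - 8 * p.2 ^ 3 / 3))) := by
  unfold K'
  rw [norm_mul, norm_mul, norm_mul, norm_mul, norm_mul]
  rw [abs_Em b h.cube_b h.im_b y p.2, abs_Ep a h.cube_a h.im_a y p.1]
  simp only [norm_neg, Complex.norm_real, Real.norm_eq_abs, h.abs_a, h.abs_b, Complex.norm_two,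
    Complex.norm_I, norm_mul]
  ring

lemma integrable_K (a b : ℂ) (h : GoodPair a b) (y : ℝ) : Integrable (K a b y) mu2 := by
  have hbi : Integrable (fun p : ℝ × ℝ =>
      (Real.sqrt p.1 * Real.exp (-y * p.1 - 8 * p.1 ^ 3 / 3)) *
      (Real.sqrt p.2 * Real.exp (-y * p.2 - 8 * p.2 ^ 3 / 3))) mu2 :=
    Integrable.mul_prod (int_sqrt_exp_cubic (-y)) (int_sqrt_exp_cubic (-y))
  refine hbi.mono' (meas_K a b y) ?_
  rw [mu2_eq]
  filter_upwards [ae_restrict_mem (measurableSet_Ioi.prod measurableSet_Ioi)] with p hp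
  exact norm_K_le a b h y hp

lemma s_ne_z (a b : ℂ) (h : GoodPair a b) {p : ℝ × ℝ}
    (hp : p ∈ Ioi (0:ℝ) ×ˢ Ioi (0:ℝ)) : (p.2:ℂ) * b - (p.1:ℂ) * a ≠ 0 := by
  obtain ⟨hp1, hp2⟩ := hp
  have hsep := sep a b h.abs_a h.abs_b h.re_mul p.1 p.2 (le_of_lt hp1) (le_of_lt hp2)
  have hpos : 0 < Real.sqrt (p.1 * p.2) :=
    Real.sqrt_pos.mpr (mul_pos hp1 hp2)
  intro h0
  rw [h0] at hsep
  simp only [norm_zero] at hsep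
  linarith

lemma hasDerivAt_K (a b : ℂ) (h : GoodPair a b) {p : ℝ × ℝ}
    (hp : p ∈ Ioi (0:ℝ) ×ˢ Ioi (0:ℝ)) (y : ℝ) :
    HasDerivAt (fun y : ℝ => K a b y p) (K' a b y p) y := by
  have hne : (p.2:ℂ) * b - (p.1:ℂ) * a ≠ 0 := s_ne_z a b h hp
  set z : ℂ := (p.1:ℂ) * a with hz
  set s : ℂ := (p.2:ℂ) * b with hs
  set C : ℂ := s * z / (s - z) with hC
  have h1 : ∀ w : ℂ, HasDerivAt (fun w : ℂ => -(2*Complex.I)*(w*s + 4*s^3/3))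
      (-(2*Complex.I)*s) w := fun w => by
    simpa using (((hasDerivAt_id w).mul_const s).add_const (4*s^3/3)).const_mul (-(2*Complex.I))
  have h2 : ∀ w : ℂ, HasDerivAt (fun w : ℂ => 2*Complex.I*(w*z + 4*z^3/3))
      (2*Complex.I*z) w := fun w => by
    simpa using (((hasDerivAt_id w).mul_const z).add_const (4*z^3/3)).const_mul (2*Complex.I)
  have hg : HasDerivAt (fun w : ℂ => C * Complex.exp (-(2*Complex.I)*(w*s + 4*s^3/3)) *
      Complex.exp (2*Complex.I*(w*z + 4*z^3/3)))
      (C * (Complex.exp (-(2*Complex.I)*((y:ℂ)*s + 4*s^3/3)) * (-(2*Complex.I)*s)) *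
        Complex.exp (2*Complex.I*((y:ℂ)*z + 4*z^3/3))
       + C * Complex.exp (-(2*Complex.I)*((y:ℂ)*s + 4*s^3/3)) *
        (Complex.exp (2*Complex.I*((y:ℂ)*z + 4*z^3/3)) * (2*Complex.I*z))) (y:ℂ) :=
    (((h1 (y:ℂ)).cexp.const_mul C).mul (h2 (y:ℂ)).cexp)
  have hr := hg.comp_ofReal
  have heq : (fun y : ℝ => C * Complex.exp (-(2*Complex.I)*((y:ℂ)*s + 4*s^3/3)) *
      Complex.exp (2*Complex.I*((y:ℂ)*z + 4*z^3/3))) = fun y : ℝ => K a b y p := by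
    funext w
    simp only [K, Em, Ep, hC, hs, hz]
  rw [heq] at hr
  convert hr using 1
  unfold K' Em Ep
  rw [← hz, ← hs, hC]
  field_simp
  ring

lemma hasDerivAt_T (a b : ℂ) (h : GoodPair a b) (y₀ : ℝ) :
    HasDerivAt (fun y => ∫ p, K a b y p ∂mu2)
      (-(2*Complex.I) * (∫ r in Ioi (0:ℝ), (r:ℂ) * a * Ep y₀ ((r:ℂ)*a)) *
        (∫ r in Ioi (0:ℝ), (r:ℂ) * b * Em y₀ ((r:ℂ)*b))) y₀ := by
  set c : ℝ := |y₀| + 1 with hc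
  have key := hasDerivAt_integral_of_dominated_loc_of_deriv_le
    (F := fun y p => K a b y p) (F' := fun y p => K' a b y p) (x₀ := y₀)
    (bound := fun p : ℝ × ℝ => 2 * ((p.1 * Real.exp (c*p.1 - 8*p.1^3/3)) *
      (p.2 * Real.exp (c*p.2 - 8*p.2^3/3)))) (μ := mu2) (Metric.ball_mem_nhds y₀ one_pos)
    (Filter.Eventually.of_forall fun y => meas_K a b y) (integrable_K a b h y₀)
    (meas_K' a b y₀) ?_ ?_ ?_
  · have := key.2
    convert this using 1
    case e'_4 => exact rfl
    have hint : ∫ p, K' a b y₀ p ∂mu2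
        = (∫ r in Ioi (0:ℝ), -(2*Complex.I) * ((r:ℂ) * a * Ep y₀ ((r:ℂ)*a))) *
          (∫ r in Ioi (0:ℝ), (r:ℂ) * b * Em y₀ ((r:ℂ)*b)) := by
      rw [mu2]
      exact integral_prod_mul (μ := volume.restrict (Ioi (0:ℝ)))
        (ν := volume.restrict (Ioi (0:ℝ)))
        (fun r : ℝ => -(2*Complex.I) * ((r:ℂ) * a * Ep y₀ ((r:ℂ)*a)))
        (fun r : ℝ => (r:ℂ) * b * Em y₀ ((r:ℂ)*b))
    rw [hint, integral_const_mul, mul_assoc]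
  · rw [mu2_eq]
    filter_upwards [ae_restrict_mem (measurableSet_Ioi.prod measurableSet_Ioi)] with p hp
    intro y hy
    obtain ⟨hp1, hp2⟩ := hp
    rw [norm_K'_le a b h y p, abs_of_pos (show (0:ℝ) < p.1 from hp1),
      abs_of_pos (show (0:ℝ) < p.2 from hp2)]
    have hyc : -y ≤ c := by
      have := abs_lt.mp (show |y - y₀| < 1 by simpa [Real.dist_eq] using hy)
      rw [hc]
      cases abs_cases y₀ with
      | inl h' => linarith [h'.1]
      | inr h' => linarith [h'.1]
    have hexp : ∀ t : ℝ, 0 < t → Real.exp (-y * t - 8 * t ^ 3 / 3) ≤ Real.exp (c * t - 8 * t ^ 3 / 3) := fun t ht =>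
      Real.exp_le_exp.mpr (by nlinarith)
    gcongr
    all_goals first
      | exact le_of_lt hp1
      | exact le_of_lt hp2
      | exact mul_nonneg (le_of_lt hp1) (Real.exp_nonneg _)
      | exact mul_nonneg (le_of_lt hp2) (Real.exp_nonneg _)
      | positivity
      | exact hexp _ hp1
      | exact hexp _ hp2
  · exact ((int_id_exp_cubic c).mul_prod (int_id_exp_cubic c)).const_mul 2
  · rw [mu2_eq]
    filter_upwards [ae_restrict_mem (measurableSet_Ioi.prod measurableSet_Ioi)] with p hp
    intro y _
    exact hasDerivAt_K a b h hp y

lemma T_iter (a b : ℂ) (h : GoodPair a b) (y : ℝ) :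
    ∫ p, K a b y p ∂mu2 = ∫ r in Ioi (0:ℝ), ∫ r' in Ioi (0:ℝ), K a b y (r, r') := by
  rw [mu2]
  exact integral_prod _ (integrable_K a b h y)

lemma hpt (a : ℂ) (y : ℝ) (r : ℝ) :
    (CInt34 fun s => s * ((r:ℂ)*a) / (s - (r:ℂ)*a) * Em y s) * Ep y ((r:ℂ)*a)
    = (∫ r' in Ioi (0:ℝ), K a em1 y (r, r')) * em1
      - (∫ r' in Ioi (0:ℝ), K a em5 y (r, r')) * em5 := by
  unfold CInt34
  rw [sub_mul]
  congr 1
  · rw [mul_right_comm, ← integral_mul_const]; rfl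
  · rw [mul_right_comm, ← integral_mul_const]; rfl

lemma step (a : ℂ) (h1 : GoodPair a em1) (h5 : GoodPair a em5) (y : ℝ) :
    (∫ r in Ioi (0:ℝ),
      (CInt34 fun s => s * ((r:ℂ)*a) / (s - (r:ℂ)*a) * Em y s) * Ep y ((r:ℂ)*a))
    = (∫ p, K a em1 y p ∂mu2) * em1 - (∫ p, K a em5 y p ∂mu2) * em5 := by
  have hint1 : Integrable (fun r : ℝ => (∫ r' in Ioi (0:ℝ), K a em1 y (r, r')) * em1)
      (volume.restrict (Ioi (0:ℝ))) :=
    ((integrable_K a em1 h1 y).integral_prod_left).mul_const em1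
  have hint5 : Integrable (fun r : ℝ => (∫ r' in Ioi (0:ℝ), K a em5 y (r, r')) * em5)
      (volume.restrict (Ioi (0:ℝ))) :=
    ((integrable_K a em5 h5 y).integral_prod_left).mul_const em5
  rw [integral_congr_ae (Filter.Eventually.of_forall fun r => hpt a y r),
    integral_sub hint1 hint5, integral_mul_const, integral_mul_const,
    T_iter a em1 h1 y, T_iter a em5 h5 y]

lemma F1_eq (y : ℝ) : F1 y =
    ((∫ p, K e1 em1 y p ∂mu2) * em1 - (∫ p, K e1 em5 y p ∂mu2) * em5) * e1
    - ((∫ p, K e5 em1 y p ∂mu2) * em1 - (∫ p, K e5 em5 y p ∂mu2) * em5) * e5 := by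
  show (∫ r in Ioi (0:ℝ),
        (CInt34 fun s => s * ((r:ℂ)*e1) / (s - (r:ℂ)*e1) * Em y s) * Ep y ((r:ℂ)*e1)) * e1
      - (∫ r in Ioi (0:ℝ),
        (CInt34 fun s => s * ((r:ℂ)*e5) / (s - (r:ℂ)*e5) * Em y s) * Ep y ((r:ℂ)*e5)) * e5 = _
  rw [step e1 gp_e1_em1 gp_e1_em5 y, step e5 gp_e5_em1 gp_e5_em5 y]

/-- Derivative of the double contour integral factorizes (from the proof of Lemma A.2). -/
theorem deriv_double_contour_factorizes :
    ∀ y : ℝ,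
      HasDerivAt F1
        (-(2 * Complex.I) *
          CInt12 (fun z => z * Complex.exp (2 * Complex.I * (y * z + 4 * z ^ 3 / 3))) *
          CInt34 (fun s => s * Complex.exp (-(2 * Complex.I) * (y * s + 4 * s ^ 3 / 3)))) y := by
  intro y
  have hF : F1 = fun y =>
      ((∫ p, K e1 em1 y p ∂mu2) * em1 - (∫ p, K e1 em5 y p ∂mu2) * em5) * e1
      - ((∫ p, K e5 em1 y p ∂mu2) * em1 - (∫ p, K e5 em5 y p ∂mu2) * em5) * e5 :=
    funext F1_eq
  rw [hF]
  have d11 := hasDerivAt_T e1 em1 gp_e1_em1 y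
  have d15 := hasDerivAt_T e1 em5 gp_e1_em5 y
  have d51 := hasDerivAt_T e5 em1 gp_e5_em1 y
  have d55 := hasDerivAt_T e5 em5 gp_e5_em5 y
  have hd := (((d11.mul_const em1).sub (d15.mul_const em5)).mul_const e1).sub
    (((d51.mul_const em1).sub (d55.mul_const em5)).mul_const e5)
  convert hd using 1
  case e'_4 => exact rfl
  · exact rfl
  unfold CInt12 CInt34 Ep Em
  beta_reduce
  ring
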